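/- Full-dimensionality for strongly connected periodic graphs: let (G, δ) be a displacement graph in dimension d whose associated periodic graph G̃ is strongly connected. Then 0 is an interior point (in ℝ^d) of the convex hull of the set of all velocities of trajectories of (G, δ); in particular, this convex hull is full-dimensional. -/

import Mathlib

/-- A path in a directed multigraph with source map `s` and target map `t`:
a nonempty list of edges `e₁ … e_n` with `t eᵢ = s eᵢ₊₁`. -/
def IsPathList {V E : Type*} (s t : E → V) (p : List E) : Prop :=
  p ≠ [] ∧ p.Chain' (fun e f => t e = s f)

/-- A cycle: a path `e₁ … e_n` with `s e₁ = t e_n` whose vertices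
`s e₁, …, s e_n` are pairwise distinct. -/
def IsCycleList {V E : Type*} (s t : E → V) (p : List E) : Prop :=
  ∃ h : p ≠ [], p.Chain' (fun e f => t e = s f) ∧
    s (p.head h) = t (p.getLast h) ∧ (p.map s).Nodup

/-- Regard a vector of `ℤ^d` as a point of Euclidean space `ℝ^d`. -/
def toR {d : ℕ} (x : Fin d → ℤ) : EuclideanSpace ℝ (Fin d) := WithLp.toLp 2 (fun i => (x i : ℝ))

/-- A trajectory: a sequence of edges with `s (f (n+1)) = t (f n)`. -/
def IsTrajectory {V E : Type*} (s t : E → V) (f : ℕ → E) : Prop :=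
  ∀ n : ℕ, s (f (n + 1)) = t (f n)

/-- `u` is the velocity of the trajectory `f`:
`(1/n) · ∑_{k=1}^n δ(f k) → u` as `n → ∞`. -/
def HasVelocity {d : ℕ} {E : Type*} (δ : E → Fin d → ℤ) (f : ℕ → E)
    (u : EuclideanSpace ℝ (Fin d)) : Prop :=
  Filter.Tendsto (fun n : ℕ => (n : ℝ)⁻¹ • ∑ k ∈ Finset.Icc 1 n, toR (δ (f k)))
    Filter.atTop (nhds u)

/-- The set of basic velocities `δ(c)/|c|` of cycles `c`. -/
def basicVelocities {d : ℕ} {V E : Type*} (s t : E → V) (δ : E → Fin d → ℤ) :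
    Set (EuclideanSpace ℝ (Fin d)) :=
  {u | ∃ c : List E, IsCycleList s t c ∧ u = (c.length : ℝ)⁻¹ • toR (c.map δ).sum}

/-- The set of all velocities of trajectories. -/
def velocitySet {d : ℕ} {V E : Type*} (s t : E → V) (δ : E → Fin d → ℤ) :
    Set (EuclideanSpace ℝ (Fin d)) :=
  {u | ∃ f : ℕ → E, IsTrajectory s t f ∧ HasVelocity δ f u}

/-- `p` is a path from vertex `a` to vertex `b`. -/
def PathFrom {V E : Type*} (s t : E → V) (a b : V) (p : List E) : Prop :=
  ∃ h : p ≠ [], p.Chain' (fun e f => t e = s f) ∧ s (p.head h) = a ∧ t (p.getLast h) = b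

/-- Strong connectivity: any vertex can be reached from any vertex by a path. -/
def StronglyConnected {V E : Type*} (s t : E → V) : Prop :=
  ∀ v w : V, ∃ p : List E, PathFrom s t v w p

/-- Source map of the periodic graph `G̃` associated to a displacement graph. -/
def sTil {d : ℕ} {V E : Type*} (s : E → V) (_δ : E → Fin d → ℤ) :
    E × (Fin d → ℤ) → V × (Fin d → ℤ) :=
  fun e => (s e.1, e.2)

/-- Target map of the periodic graph `G̃` associated to a displacement graph. -/
def tTil {d : ℕ} {V E : Type*} (t : E → V) (δ : E → Fin d → ℤ) :
    E × (Fin d → ℤ) → V × (Fin d → ℤ) :=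
  fun e => (t e.1, e.2 + δ e.1)

/-- Length of a shortest path from `a` to `b` (with `graphDist a a = 0`). -/
noncomputable def graphDist {V E : Type*} (s t : E → V) (a b : V) : ℕ :=
  sInf {n : ℕ | (a = b ∧ n = 0) ∨ ∃ p : List E, PathFrom s t a b p ∧ p.length = n}


lemma disp_sum {d : ℕ} {V E : Type*} (s : E → V) (t : E → V) (δ : E → Fin d → ℤ)
    (p : List (E × (Fin d → ℤ))) (h : p ≠ [])
    (hc : p.Chain' (fun e f => tTil t δ e = sTil s δ f)) :
    (p.getLast h).2 + δ (p.getLast h).1 = (p.head h).2 + ((p.map Prod.fst).map δ).sum := by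
  induction p with
  | nil => exact absurd rfl h
  | cons e q ih =>
    cases q with
    | nil => simp
    | cons f r =>
      have hef : tTil t δ e = sTil s δ f := (List.isChain_cons_cons.mp hc).1
      have hf2 : f.2 = e.2 + δ e.1 := by
        have := congrArg Prod.snd hef
        simpa [tTil, sTil] using this.symm
      have hc' : (f :: r).Chain' (fun e f => tTil t δ e = sTil s δ f) :=
        (List.isChain_cons_cons.mp hc).2
      have ihh := ih (by simp) hc'
      rw [List.getLast_cons (by simp : (f :: r) ≠ [])]
      rw [ihh]
      simp [hf2]
      abel

lemma exists_walk {d : ℕ} {V E : Type*} (s t : E → V) (δ : E → Fin d → ℤ)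
    (hconn : ∀ a b : V × (Fin d → ℤ), a ≠ b →
      ∃ p : List (E × (Fin d → ℤ)), PathFrom (sTil s δ) (tTil t δ) a b p)
    (v : V) (x : Fin d → ℤ) (hx : x ≠ 0) :
    ∃ q : List E, ∃ h : q ≠ [], q.Chain' (fun e f => t e = s f) ∧
      s (q.head h) = v ∧ t (q.getLast h) = v ∧ (q.map δ).sum = x := by
  obtain ⟨p, hne, hc, hhead, hlast⟩ := hconn (v, 0) (v, x) (by simp [Prod.ext_iff]; exact fun h => hx h.symm)
  refine ⟨p.map Prod.fst, by simpa using hne, ?_, ?_, ?_, ?_⟩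
  · show List.IsChain _ _
    rw [List.isChain_map]
    exact hc.imp (fun a b hab => congrArg Prod.fst hab)
  · rw [List.head_map]
    exact congrArg Prod.fst hhead
  · rw [List.getLast_map]
    exact congrArg Prod.fst hlast
  · have hd := disp_sum s t δ p hne hc
    have h1 : (p.head hne).2 = 0 := congrArg Prod.snd hhead
    have h2 : (p.getLast hne).2 + δ (p.getLast hne).1 = x := congrArg Prod.snd hlast
    rw [h1, h2] at hd
    simpa using hd.symm

lemma toR_listsum {d : ℕ} (l : List (Fin d → ℤ)) : toR l.sum = (l.map toR).sum := by
  induction l with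
  | nil => ext i; simp [toR]
  | cons a q ih =>
    simp only [List.sum_cons, List.map_cons]
    rw [← ih]; ext i; simp [toR]

lemma take_sum_eq {M : Type*} [AddCommMonoid M] (l : List M) :
    ∀ m, m ≤ l.length → (l.take m).sum = ∑ j ∈ Finset.range m, l.getD j 0 := by
  intro m
  induction m with
  | zero => simp
  | succ m ih =>
    intro hm
    rw [List.sum_take_succ l m (by omega), Finset.sum_range_succ, ih (by omega),
      List.getD_eq_getElem l 0 (by omega)]

lemma walk_velocity {d : ℕ} {V E : Type*} (s t : E → V) (δ : E → Fin d → ℤ)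
    (q : List E) (h : q ≠ []) (hc : q.Chain' (fun e f => t e = s f))
    (hcl : s (q.head h) = t (q.getLast h)) :
    ((q.length : ℝ)⁻¹ • toR (q.map δ).sum) ∈ velocitySet s t δ := by
  set n := q.length with hn
  have hn0 : 0 < n := List.length_pos_iff.mpr h
  set f : ℕ → E := fun k => q.get ⟨k % n, Nat.mod_lt _ hn0⟩ with hf
  set g : ℕ → EuclideanSpace ℝ (Fin d) := fun k => toR (δ (f k)) with hg
  set S : EuclideanSpace ℝ (Fin d) := toR (q.map δ).sum with hS
  set u : EuclideanSpace ℝ (Fin d) := (n : ℝ)⁻¹ • S with hu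
  -- trajectory
  have htraj : IsTrajectory s t f := by
    intro k
    rcases eq_or_lt_of_le (Nat.succ_le_of_lt (Nat.mod_lt k hn0)) with he | hlt
    · have h1 : (k + 1) % n = 0 := by
        rw [← Nat.mod_add_mod, show k % n + 1 = n from he, Nat.mod_self]
      have h2 : k % n = n - 1 := by omega
      simp only [hf, h1, h2]
      have hhead : q.head h = q.get ⟨0, hn0⟩ := by
        cases q with
        | nil => exact absurd rfl h
        | cons a l => rfl
      have hlast : q.getLast h = q.get ⟨n - 1, by omega⟩ := List.getLast_eq_getElem h
      rw [← hhead]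
      convert hcl using 3
      rw [hlast]
    · have h1 : (k + 1) % n = k % n + 1 := by
        rw [← Nat.mod_add_mod, Nat.mod_eq_of_lt hlt]
      simp only [hf, h1]
      exact (List.isChain_iff_getElem.mp hc (k % n) (by omega)).symm
  -- periodicity of g
  have hper : ∀ k, g (k + n) = g k := by
    intro k; simp only [hg, hf, Nat.add_mod_right]
  -- S as a sum over a period
  have hSsum : S = ∑ j ∈ Finset.range n, g j := by
    have hl : (q.map (fun e => toR (δ e))).length = n := by simp [hn]
    rw [hS, toR_listsum, List.map_map]
    have : (q.map (toR ∘ δ)).sum = ((q.map (toR ∘ δ)).take n).sum := by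
      rw [List.take_of_length_le (by simp [hn])]
    rw [this, take_sum_eq _ n (by simp [hn])]
    refine Finset.sum_congr rfl fun j hj => ?_
    have hjn : j < n := Finset.mem_range.mp hj
    rw [List.getD_eq_getElem _ 0 (by simp [hn]; omega)]
    simp only [List.getElem_map, hg, hf]
    congr 2
    · simp [Nat.mod_eq_of_lt hjn]
  -- chunk: any window of length n sums to S
  have hchunk : ∀ N, ∑ k ∈ Finset.Ico N (N + n), g k = S := by
    intro N
    induction N with
    | zero => rw [hSsum]; simp
    | succ N ih =>
      rw [← ih]
      have e1 : ∑ k ∈ Finset.Ico N (N + n), g k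
          = g N + ∑ k ∈ Finset.Ico (N + 1) (N + n), g k :=
        Finset.sum_eq_sum_Ico_succ_bot (by omega) g
      have e2 : ∑ k ∈ Finset.Ico (N + 1) (N + 1 + n), g k
          = (∑ k ∈ Finset.Ico (N + 1) (N + n), g k) + g (N + n) := by
        have : N + 1 + n = (N + n) + 1 := by omega
        rw [this, Finset.sum_Ico_succ_top (by omega)]
      rw [e2, e1, hper N]
      abel
  -- n • u = S
  have hnu : (n : ℝ) • u = S := by
    rw [hu, smul_smul, mul_inv_cancel₀ (by positivity), one_smul]
  -- bound on g
  set M : ℝ := ∑ j ∈ Finset.range n, ‖g j‖ with hM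
  have hgM : ∀ k, ‖g k‖ ≤ M := by
    intro k
    have hk : g k = g (k % n) := by
      have hmm : k % n % n = k % n := Nat.mod_eq_of_lt (Nat.mod_lt k hn0)
      simp only [hg, hf, hmm]
    rw [hk, hM]
    exact Finset.single_le_sum (fun j _ => norm_nonneg (g j))
      (Finset.mem_range.mpr (Nat.mod_lt k hn0))
  have hM0 : 0 ≤ M := Finset.sum_nonneg fun j _ => norm_nonneg (g j)
  -- partial sums
  set A : ℕ → EuclideanSpace ℝ (Fin d) := fun N => ∑ k ∈ Finset.range N, g k with hA
  set C : ℝ := n * (M + ‖u‖) with hC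
  have hbound : ∀ N, ‖A N - (N : ℝ) • u‖ ≤ C := by
    intro N
    induction N using Nat.strong_induction_on with
    | _ N ih =>
      rcases lt_or_ge N n with hNn | hNn
      · have h1 : ‖A N‖ ≤ (N : ℝ) * M := by
          calc ‖A N‖ ≤ ∑ k ∈ Finset.range N, ‖g k‖ := norm_sum_le _ _
          _ ≤ ∑ _k ∈ Finset.range N, M := Finset.sum_le_sum fun k _ => hgM k
          _ = (N : ℝ) * M := by simp [mul_comm]
        have h2 : ‖(N : ℝ) • u‖ = (N : ℝ) * ‖u‖ := by
          rw [norm_smul]; simp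
        have hNn' : (N : ℝ) ≤ n := by exact_mod_cast hNn.le
        calc ‖A N - (N : ℝ) • u‖ ≤ ‖A N‖ + ‖(N : ℝ) • u‖ := norm_sub_le _ _
        _ ≤ (N : ℝ) * M + (N : ℝ) * ‖u‖ := by rw [h2]; linarith
        _ ≤ (n : ℝ) * M + (n : ℝ) * ‖u‖ := by
            have := norm_nonneg u
            nlinarith
        _ = C := by rw [hC]; ring
      · have hsplit : A N = A (N - n) + ∑ k ∈ Finset.Ico (N - n) N, g k := by
          rw [hA]
          simp only
          rw [Finset.range_eq_Ico, Finset.range_eq_Ico]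
          exact (Finset.sum_Ico_consecutive _ (Nat.zero_le _) (Nat.sub_le N n)).symm
        have hck : ∑ k ∈ Finset.Ico (N - n) N, g k = S := by
          have h' := hchunk (N - n)
          rwa [Nat.sub_add_cancel hNn] at h'
        have hcast : (N : ℝ) = ((N - n : ℕ) : ℝ) + n := by
          have h' : N - n + n = N := Nat.sub_add_cancel hNn
          exact_mod_cast h'.symm
        have : A N - (N : ℝ) • u = A (N - n) - ((N - n : ℕ) : ℝ) • u := by
          rw [hsplit, hck, hcast, add_smul, hnu]
          abel
        rw [this]
        exact ih (N - n) (by omega)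
  -- conclude
  refine ⟨f, htraj, ?_⟩
  rw [HasVelocity]
  have hfor : ∀ N : ℕ, 1 ≤ N →
      ‖((N : ℝ)⁻¹ • ∑ k ∈ Finset.Icc 1 N, toR (δ (f k))) - u‖ ≤ (C + ‖u‖ + M) / N := by
    intro N hN
    have hIcc : ∑ k ∈ Finset.Icc 1 N, toR (δ (f k)) = A (N + 1) - g 0 := by
      have h1 : A (N + 1) = g 0 + ∑ k ∈ Finset.Ico 1 (N + 1), g k := by
        rw [hA]
        simp only
        rw [Finset.range_eq_Ico]
        exact Finset.sum_eq_sum_Ico_succ_bot (by omega) g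
      have h2 : Finset.Ico 1 (N + 1) = Finset.Icc 1 N := by
        rw [Finset.Ico_add_one_right_eq_Icc]
      rw [h1, h2]
      abel
    have hN0 : (0 : ℝ) < N := by exact_mod_cast hN
    rw [hIcc]
    have key : (N : ℝ)⁻¹ • (A (N + 1) - g 0) - u
        = (N : ℝ)⁻¹ • ((A (N + 1) - ((N + 1 : ℕ) : ℝ) • u) + (u - g 0)) := by
      have e : (N : ℝ)⁻¹ • (((N + 1 : ℕ) : ℝ) • u) = u + (N : ℝ)⁻¹ • u := by
        push_cast
        rw [add_smul, one_smul, smul_add, smul_smul, inv_mul_cancel₀ (ne_of_gt hN0), one_smul]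
      simp only [smul_add, smul_sub]
      rw [e]
      abel
    rw [key, norm_smul]
    rw [norm_inv, Real.norm_natCast]
    rw [div_eq_inv_mul]
    refine mul_le_mul_of_nonneg_left ?_ (by positivity)
    calc ‖(A (N + 1) - ((N + 1 : ℕ) : ℝ) • u) + (u - g 0)‖
        ≤ ‖A (N + 1) - ((N + 1 : ℕ) : ℝ) • u‖ + ‖u - g 0‖ := norm_add_le _ _
      _ ≤ C + (‖u‖ + ‖g 0‖) := add_le_add (hbound (N + 1)) (norm_sub_le _ _)
      _ ≤ C + ‖u‖ + M := by have := hgM 0; linarith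
  rw [tendsto_iff_norm_sub_tendsto_zero]
  refine squeeze_zero' (g := fun N : ℕ => (C + ‖u‖ + M) / N)
    (Filter.Eventually.of_forall fun N => norm_nonneg _) ?_ ?_
  · filter_upwards [Filter.eventually_ge_atTop 1] with N hN
    exact hfor N hN
  · exact tendsto_const_div_atTop_nhds_zero_nat _

lemma coord_le_norm {d : ℕ} (x : EuclideanSpace ℝ (Fin d)) (i : Fin d) : |x i| ≤ ‖x‖ := by
  rw [EuclideanSpace.norm_eq]
  have h1 : |x i| = Real.sqrt (x i ^ 2) := by
    rw [Real.sqrt_sq_eq_abs]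
  rw [h1]
  apply Real.sqrt_le_sqrt
  have : x i ^ 2 = ‖x i‖ ^ 2 := by rw [Real.norm_eq_abs, sq_abs]
  rw [this]
  exact Finset.single_le_sum (f := fun j => ‖x j‖ ^ 2) (fun j _ => by positivity)
    (Finset.mem_univ i)

lemma geom {d : ℕ} (hd : 1 ≤ d) (T : Set (EuclideanSpace ℝ (Fin d)))
    (a b : Fin d → ℝ) (ha : ∀ i, 0 < a i) (hb : ∀ i, 0 < b i)
    (hTa : ∀ i, (a i) • (EuclideanSpace.single i (1 : ℝ)) ∈ T)
    (hTb : ∀ i, (-(b i)) • (EuclideanSpace.single i (1 : ℝ)) ∈ T) :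
    (0 : EuclideanSpace ℝ (Fin d)) ∈ interior (convexHull ℝ T) := by
  haveI : Nonempty (Fin d) := ⟨⟨0, hd⟩⟩
  set m : ℝ := Finset.univ.inf' Finset.univ_nonempty (fun i => min (a i) (b i)) with hm
  have hm0 : 0 < m := by
    rw [hm, Finset.lt_inf'_iff]
    exact fun i _ => lt_min (ha i) (hb i)
  have hma : ∀ i, m ≤ a i := fun i =>
    le_trans (Finset.inf'_le _ (Finset.mem_univ i)) (min_le_left _ _)
  have hmb : ∀ i, m ≤ b i := fun i =>
    le_trans (Finset.inf'_le _ (Finset.mem_univ i)) (min_le_right _ _)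
  set ε : ℝ := m / d with he
  have hε0 : 0 < ε := by positivity
  have hball : Metric.ball (0 : EuclideanSpace ℝ (Fin d)) ε ⊆ convexHull ℝ T := by
    intro x hx
    rw [Metric.mem_ball, dist_zero_right] at hx
    have hxi : ∀ i, (d : ℝ) * |x i| ≤ m := by
      intro i
      have h1 : |x i| ≤ ‖x‖ := coord_le_norm x i
      have h2 : (d : ℝ) * ‖x‖ < d * ε := by
        apply mul_lt_mul_of_pos_left hx
        exact_mod_cast hd
      have h3 : (d : ℝ) * ε = m := by
        rw [he]; field_simp
      nlinarith [mul_le_mul_of_nonneg_left h1 (by positivity : (0:ℝ) ≤ d)]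
    -- each d*x_i e_i is in the hull
    have hpoint : ∀ i, ((d : ℝ) * x i) • (EuclideanSpace.single i (1 : ℝ)) ∈ convexHull ℝ T := by
      intro i
      set c : ℝ := ((d : ℝ) * x i + b i) / (a i + b i) with hc
      have hab : 0 < a i + b i := by have := ha i; have := hb i; linarith
      have hd0 : (0:ℝ) ≤ (d:ℝ) := by positivity
      have hxa : (d : ℝ) * x i ≤ a i := by
        have h1 : (d:ℝ) * x i ≤ (d:ℝ) * |x i| :=
          mul_le_mul_of_nonneg_left (le_abs_self _) hd0
        linarith [hxi i, hma i]
      have hxb : -(b i) ≤ (d : ℝ) * x i := by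
        have h1 : (d:ℝ) * (-(x i)) ≤ (d:ℝ) * |x i| :=
          mul_le_mul_of_nonneg_left (neg_le_abs _) hd0
        have := hmb i
        have := hxi i
        nlinarith
      have hc0 : 0 ≤ c := by
        rw [hc]; apply div_nonneg _ hab.le; linarith
      have hc1 : c ≤ 1 := by
        rw [hc, div_le_one hab]; linarith
      have hseg : ((d : ℝ) * x i) • (EuclideanSpace.single i (1 : ℝ))
          ∈ segment ℝ ((a i) • (EuclideanSpace.single i (1 : ℝ)))
                      ((-(b i)) • (EuclideanSpace.single i (1 : ℝ))) := by
        refine ⟨c, 1 - c, hc0, by linarith, by ring, ?_⟩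
        rw [smul_smul, smul_smul, ← add_smul]
        congr 1
        rw [hc]
        field_simp
        ring
      exact (convex_convexHull ℝ T).segment_subset
        (subset_convexHull ℝ T (hTa i)) (subset_convexHull ℝ T (hTb i)) hseg
    -- x is the average
    have hxsum : x = ∑ i : Fin d, ((d : ℝ)⁻¹) • (((d : ℝ) * x i) • (EuclideanSpace.single i (1 : ℝ))) := by
      ext j
      rw [WithLp.ofLp_sum, Finset.sum_apply]
      have : ∀ i : Fin d, (((d : ℝ)⁻¹) • (((d : ℝ) * x i) • (EuclideanSpace.single i (1 : ℝ)))) j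
          = x i * (if j = i then 1 else 0) := by
        intro i
        simp only [PiLp.smul_apply, EuclideanSpace.single_apply, smul_eq_mul]
        have hd0 : (d : ℝ) ≠ 0 := by positivity
        field_simp
      simp only [this]
      simp
    rw [hxsum]
    exact (convex_convexHull ℝ T).sum_mem
      (fun i _ => by positivity)
      (by simp; field_simp)
      (fun i _ => hpoint i)
  exact mem_interior.mpr ⟨Metric.ball 0 ε, hball, Metric.isOpen_ball, Metric.mem_ball_self hε0⟩


lemma toR_single {d : ℕ} (i : Fin d) :
    toR (Pi.single i (1 : ℤ)) = EuclideanSpace.single i (1 : ℝ) := by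
  ext j
  simp only [toR, PiLp.toLp_apply, EuclideanSpace.single_apply, Pi.single_apply]
  split_ifs <;> simp_all

lemma toR_neg {d : ℕ} (x : Fin d → ℤ) : toR (-x) = -toR x := by
  ext j; simp [toR]

/-- Full-dimensionality for strongly connected periodic graphs: if the periodic
graph `G̃` associated to `(G, δ)` is strongly connected, then `0` is an interior
point of the convex hull of the set of all velocities of trajectories. -/
theorem stmt17 {d : ℕ} (hd : 1 ≤ d) {V E : Type*} [Fintype V] [Nonempty V] [Fintype E]
    (s t : E → V) (δ : E → Fin d → ℤ)
    (hconn : ∀ a b : V × (Fin d → ℤ), a ≠ b →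
      ∃ p : List (E × (Fin d → ℤ)), PathFrom (sTil s δ) (tTil t δ) a b p) :
    (0 : EuclideanSpace ℝ (Fin d)) ∈ interior (convexHull ℝ (velocitySet s t δ)) := by
  haveI : Nonempty (Fin d) := ⟨⟨0, hd⟩⟩
  obtain ⟨v⟩ := ‹Nonempty V›
  have hsne : ∀ i : Fin d, (Pi.single i (1 : ℤ) : Fin d → ℤ) ≠ 0 := by
    intro i h0
    have := congrFun h0 i
    simp at this
  have hpos : ∀ i : Fin d, ∃ L : ℕ, 0 < L ∧
      ((L : ℝ)⁻¹ • EuclideanSpace.single i (1 : ℝ)) ∈ velocitySet s t δ := by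
    intro i
    obtain ⟨q, hq, hc, hh, hl, hsum⟩ :=
      exists_walk s t δ hconn v (Pi.single i 1) (hsne i)
    refine ⟨q.length, List.length_pos_iff.mpr hq, ?_⟩
    have hmem := walk_velocity s t δ q hq hc (hh.trans hl.symm)
    rwa [hsum, toR_single] at hmem
  have hneg : ∀ i : Fin d, ∃ L : ℕ, 0 < L ∧
      ((-(L : ℝ)⁻¹) • EuclideanSpace.single i (1 : ℝ)) ∈ velocitySet s t δ := by
    intro i
    obtain ⟨q, hq, hc, hh, hl, hsum⟩ :=
      exists_walk s t δ hconn v (-Pi.single i 1) (by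
        intro h0
        apply hsne i
        have := congrArg (fun y => -y) h0
        simpa using this)
    refine ⟨q.length, List.length_pos_iff.mpr hq, ?_⟩
    have hmem := walk_velocity s t δ q hq hc (hh.trans hl.symm)
    rw [hsum, toR_neg, toR_single] at hmem
    rwa [smul_neg, ← neg_smul] at hmem
  choose La hLa hmema using hpos
  choose Lb hLb hmemb using hneg
  exact geom hd (velocitySet s t δ)
    (fun i => (La i : ℝ)⁻¹) (fun i => (Lb i : ℝ)⁻¹)
    (fun i => by have := hLa i; positivity)
    (fun i => by have := hLb i; positivity)
    hmema hmemb
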